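/- If W is uniformly distributed on [-ε/2, ε/2] and x is any fixed real number, then the dither quantization error e = Q(x + W) - W - x is uniformly distributed on [-ε/2, ε/2], where Q is the mid-point uniform quantizer with resolution ε (assuming x + W stays in the non-saturated region). -/

import Mathlib

open MeasureTheory

private lemma dither_g_measurable (ε c : ℝ) :
    Measurable (fun w : ℝ => ε / 2 - ε * Int.fract ((w + c) / ε)) :=
  measurable_const.sub
    (measurable_const.mul ((measurable_id.add_const c).div_const ε).fract)

private lemma dither_key (ε : ℝ) (hε : 0 < ε) (c : ℝ) :
    Measure.map (fun w : ℝ => ε / 2 - ε * Int.fract ((w + c) / ε))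
      (volume.restrict (Set.Icc (-(ε / 2)) (ε / 2))) =
      volume.restrict (Set.Icc (-(ε / 2)) (ε / 2)) := by
  haveI : Fact (0 < ε) := ⟨hε⟩
  set g : ℝ → ℝ := fun w => ε / 2 - ε * Int.fract ((w + c) / ε) with hgdef
  have hg : Measurable g := dither_g_measurable ε c
  have hper : Function.Periodic g ε := by
    intro w
    have h1 : (w + ε + c) / ε = (w + c) / ε + 1 := by
      field_simp
      ring
    simp only [hgdef, h1, Int.fract_add_one]
  set G : AddCircle ε → ℝ := hper.lift with hGdef
  have hGmk : ∀ w : ℝ, G ((w : ℝ) : AddCircle ε) = g w := fun w => hper.lift_coe w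
  have hGeq : G = fun z : AddCircle ε =>
      g ((AddCircle.equivIoc ε (-c) z : Set.Ioc (-c) (-c + ε)) : ℝ) := by
    funext z
    induction z using QuotientAddGroup.induction_on with
    | H w =>
      have h2 : AddCircle.equivIoc ε (-c) ((w : ℝ) : AddCircle ε) =
          ⟨toIocMod (Fact.out : 0 < ε) (-c) w, toIocMod_mem_Ioc _ _ _⟩ :=
        QuotientAddGroup.equivIocMod_coe _ _ _
      rw [hGmk, h2]
      show g w = g (toIocMod (Fact.out : 0 < ε) (-c) w)
      rw [← self_sub_toIocDiv_zsmul (Fact.out : 0 < ε) (-c) w]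
      exact (hper.sub_zsmul_eq _).symm
  have hG : Measurable G := by
    rw [hGeq]
    exact hg.comp
      (measurable_subtype_coe.comp (AddCircle.measurableEquivIoc ε (-c)).measurable)
  have hmk : Measurable ((↑) : ℝ → AddCircle ε) :=
    (AddCircle.continuous_mk' ε).measurable
  have hcomp : ∀ ν : Measure ℝ,
      Measure.map g ν = Measure.map G (Measure.map ((↑) : ℝ → AddCircle ε) ν) := by
    intro ν
    have hge : g = G ∘ QuotientAddGroup.mk := by
      funext w
      exact (hGmk w).symm
    rw [hge, ← Measure.map_map hG hmk]
  have hmap1 : Measure.map ((↑) : ℝ → AddCircle ε)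
      (volume.restrict (Set.Ioc (-(ε / 2)) (ε / 2))) = volume := by
    have := (AddCircle.measurePreserving_mk ε (-(ε / 2))).map_eq
    rwa [show -(ε / 2) + ε = ε / 2 by ring] at this
  have hmap2 : Measure.map ((↑) : ℝ → AddCircle ε)
      (volume.restrict (Set.Ioc (-c) (-c + ε))) = volume :=
    (AddCircle.measurePreserving_mk ε (-c)).map_eq
  -- on the interval (-c, -c + ε), g is a.e. equal to the reflection w ↦ (ε/2 - c) - w
  have hstep : Measure.map g (volume.restrict (Set.Ioc (-c) (-c + ε))) =
      Measure.map (fun w : ℝ => (ε / 2 - c) - w)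
        (volume.restrict (Set.Ioc (-c) (-c + ε))) := by
    rw [← Measure.restrict_congr_set (Ioo_ae_eq_Ioc (a := -c) (b := -c + ε) (μ := volume))]
    apply Measure.map_congr
    filter_upwards [ae_restrict_mem measurableSet_Ioo] with w hw
    have h0 : (0 : ℝ) < w + c := by
      have := hw.1
      linarith
    have h1 : w + c < ε := by
      have := hw.2
      linarith
    have hfr : Int.fract ((w + c) / ε) = (w + c) / ε := by
      rw [Int.fract_eq_self]
      constructor
      · positivity
      · rw [div_lt_one hε]
        exact h1
    simp only [hgdef, hfr]
    field_simp
    ring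
  -- the reflection is a measurable embedding preserving volume
  have hrefl : MeasurePreserving (fun w : ℝ => (ε / 2 - c) - w) volume volume := by
    have h1 : MeasurePreserving (fun w : ℝ => -w) (volume : Measure ℝ) volume :=
      Measure.measurePreserving_neg _
    have h2 : MeasurePreserving (fun w : ℝ => (ε / 2 - c) + w) (volume : Measure ℝ) volume :=
      measurePreserving_add_left _ _
    have := h2.comp h1
    simpa [Function.comp_def, sub_eq_add_neg] using this
  have hemb : MeasurableEmbedding (fun w : ℝ => (ε / 2 - c) - w) := by
    let e : ℝ ≃ᵐ ℝ :=
      { toFun := fun w => (ε / 2 - c) - w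
        invFun := fun w => (ε / 2 - c) - w
        left_inv := fun w => by ring
        right_inv := fun w => by ring
        measurable_toFun := measurable_const.sub measurable_id
        measurable_invFun := measurable_const.sub measurable_id }
    exact e.measurableEmbedding
  have hpre : (fun w : ℝ => (ε / 2 - c) - w) ⁻¹' Set.Ico (-(ε / 2)) (ε / 2) =
      Set.Ioc (-c) (-c + ε) := by
    ext w
    simp only [Set.mem_preimage, Set.mem_Ico, Set.mem_Ioc]
    constructor
    · rintro ⟨h1, h2⟩
      constructor <;> linarith
    · rintro ⟨h1, h2⟩
      constructor <;> linarith
  have hfinal : Measure.map (fun w : ℝ => (ε / 2 - c) - w)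
      (volume.restrict (Set.Ioc (-c) (-c + ε))) =
      volume.restrict (Set.Icc (-(ε / 2)) (ε / 2)) := by
    rw [← hpre, ← Measure.restrict_map hemb.measurable measurableSet_Ico,
      hrefl.map_eq, Measure.restrict_congr_set Ico_ae_eq_Icc]
  calc Measure.map g (volume.restrict (Set.Icc (-(ε / 2)) (ε / 2)))
      = Measure.map g (volume.restrict (Set.Ioc (-(ε / 2)) (ε / 2))) := by
        rw [Measure.restrict_congr_set Ioc_ae_eq_Icc]
    _ = Measure.map G volume := by rw [hcomp, hmap1]
    _ = Measure.map g (volume.restrict (Set.Ioc (-c) (-c + ε))) := by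
        rw [hcomp, hmap2]
    _ = volume.restrict (Set.Icc (-(ε / 2)) (ε / 2)) := by rw [hstep, hfinal]

theorem dither_error_uniform
    {Ω : Type*} [MeasureSpace Ω] [IsProbabilityMeasure (volume : Measure Ω)]
    (ε umin umax : ℝ) (hε : 0 < ε)
    (W : Ω → ℝ) (hW : Measurable W)
    (hWu : pdf.IsUniform W (Set.Icc (-(ε / 2)) (ε / 2)) (volume : Measure Ω))
    (Q : ℝ → ℝ) (hQ : ∀ y, Q y = ε * (⌊(y - umin) / ε⌋ : ℝ) + umin + ε / 2)
    (x : ℝ) (hns : ∀ᵐ ω ∂(volume : Measure Ω), x + W ω ∈ Set.Ioo umin umax) :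
    pdf.IsUniform (fun ω : Ω => Q (x + W ω) - W ω - x)
      (Set.Icc (-(ε / 2)) (ε / 2)) (volume : Measure Ω) := by
  set g : ℝ → ℝ := fun w => ε / 2 - ε * Int.fract ((w + (x - umin)) / ε) with hgdef
  have hg : Measurable g := dither_g_measurable ε (x - umin)
  have hfun : (fun ω : Ω => Q (x + W ω) - W ω - x) = g ∘ W := by
    funext ω
    simp only [Function.comp_apply, hQ, hgdef]
    have harg : (x + W ω - umin) / ε = (W ω + (x - umin)) / ε := by ring_nf
    rw [Int.fract, ← harg]
    field_simp
    ring
  unfold pdf.IsUniform at hWu ⊢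
  rw [hfun, ← Measure.map_map hg hW, hWu]
  unfold ProbabilityTheory.cond
  rw [Measure.map_smul, dither_key ε hε (x - umin)]
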